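/- Let W = ℂ² with basis w_1, w_2, and define an antisymmetric bilinear form ⟨·,·⟩ on W ⊗ ℂ[t, t^{−1}] by ⟨w_1 ⊗ t^i, w_2 ⊗ t^j⟩ = δ_{i+j,−1}, ⟨w_2 ⊗ t^j, w_1 ⊗ t^i⟩ = −δ_{i+j,−1}, and ⟨w_1 ⊗ t^i, w_1 ⊗ t^j⟩ = ⟨w_2 ⊗ t^i, w_2 ⊗ t^j⟩ = 0. Let (x_i)_{i≥1}, (y_i)_{i≥1}, (z_i)_{i≥1} be complex numbers, all but finitely many equal to zero, and let U be the ℂ-span of the vectors u_k = w_1 ⊗ t^k + Σ_{i≥1} (y_{i+k} w_1 + z_{i+k} w_2) ⊗ t^{−i} and u'_k = w_2 ⊗ t^k + Σ_{i≥1} (x_{i+k} w_1 − y_{i+k} w_2) ⊗ t^{−i} over all k ≥ 0. Then U is isotropic with respect to ⟨·,·⟩, and pr((id_W ⊗ t)(U)) ⊆ U, where pr is the projection annihilating the component W ⊗ t^0 and fixing W ⊗ t^j for j ≠ 0. -/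

import Mathlib

open Finsupp

/- We model `W ⊗ ℂ[t,t⁻¹]` for `W = ℂ²` as `ℤ →₀ (Fin 2 → ℂ)`: the value of `f` at
`i` is the pair of coordinates of the coefficient of `t^i` in the basis `w₁, w₂`;
`w₁ ⊗ t^i` is `Finsupp.single i ![1,0]` and `w₂ ⊗ t^i` is `Finsupp.single i ![0,1]`.
The form `⟨w₁ ⊗ t^i, w₂ ⊗ t^j⟩ = δ_{i+j,-1}` (antisymmetric, `⟨w₁⊗t^i,w₁⊗t^j⟩ =
⟨w₂⊗t^i,w₂⊗t^j⟩ = 0`) becomes `⟨a, b⟩ = Σ_i (a_i)₁(b_{-1-i})₂ - (a_i)₂(b_{-1-i})₁`.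
Multiplication by `t` is `Finsupp.mapDomain (· + 1)` and the projection `pr`
annihilating `W ⊗ t^0` sends `f` to `f - Finsupp.single 0 (f 0)`. -/

noncomputable section Stmt14Aux

abbrev V14 := ℤ →₀ (Fin 2 → ℂ)

def G14 (c d : ℕ → ℂ) (k : ℕ) : V14 :=
  ∑ᶠ i : ℕ, Finsupp.single (-(i : ℤ) - 1) ![c (i + 1 + k), d (i + 1 + k)]

lemma hGsupp14 {c d : ℕ → ℂ} (hc : {i | c i ≠ 0}.Finite) (hd : {i | d i ≠ 0}.Finite) (k : ℕ) :
    (Function.support fun i : ℕ =>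
      Finsupp.single (-(i : ℤ) - 1) ![c (i + 1 + k), d (i + 1 + k)] : Set ℕ).Finite := by
  apply Set.Finite.subset ((hc.union hd).preimage
      (Set.injOn_of_injective (f := fun i : ℕ => i + 1 + k) (fun a b h => by simp only at h; omega)))
  · intro i hi
    simp only [Function.mem_support] at hi
    by_contra hmem
    simp only [Set.mem_preimage, Set.mem_union, Set.mem_setOf_eq, not_or, not_not] at hmem
    apply hi
    rw [hmem.1, hmem.2]
    rw [Finsupp.single_eq_zero]
    ext j; fin_cases j <;> rfl

lemma G14_apply (c d : ℕ → ℂ) (hc : {i | c i ≠ 0}.Finite) (hd : {i | d i ≠ 0}.Finite)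
    (k : ℕ) (j : ℤ) :
    G14 c d k j = ∑ᶠ i : ℕ, (Finsupp.single (-(i : ℤ) - 1) ![c (i+1+k), d (i+1+k)] : V14) j :=
  (Finsupp.applyAddHom (M := Fin 2 → ℂ) j).map_finsum (hGsupp14 hc hd k)

lemma G14_apply_ofNat (c d : ℕ → ℂ) (hc : {i | c i ≠ 0}.Finite) (hd : {i | d i ≠ 0}.Finite)
    (k n : ℕ) : G14 c d k (n : ℤ) = 0 := by
  rw [G14_apply c d hc hd]
  apply finsum_eq_zero_of_forall_eq_zero
  intro i
  apply Finsupp.single_eq_of_ne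
  omega

lemma G14_apply_negSucc (c d : ℕ → ℂ) (hc : {i | c i ≠ 0}.Finite) (hd : {i | d i ≠ 0}.Finite)
    (k n : ℕ) : G14 c d k (Int.negSucc n) = ![c (n+1+k), d (n+1+k)] := by
  rw [G14_apply c d hc hd]
  rw [finsum_eq_single _ n ?_]
  · rw [show Int.negSucc n = -(n:ℤ) - 1 by rw [Int.negSucc_eq]; ring, Finsupp.single_eq_same]
  · intro i hi
    apply Finsupp.single_eq_of_ne
    rw [Int.negSucc_eq]
    omega

def ev14 (j : ℤ) (c : Fin 2) : V14 →ₗ[ℂ] ℂ :=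
  (LinearMap.proj c) ∘ₗ (Finsupp.lapply j)

def Brow14 (i : ℤ) : (Fin 2 → ℂ) →ₗ[ℂ] (V14 →ₗ[ℂ] ℂ) where
  toFun v := v 0 • ev14 (-1-i) 1 - v 1 • ev14 (-1-i) 0
  map_add' a b := by simp only [Pi.add_apply, add_smul]; abel
  map_smul' r a := by
    simp only [Pi.smul_apply, smul_eq_mul, RingHom.id_apply, smul_sub, mul_smul]

def Bmap14 : V14 →ₗ[ℂ] V14 →ₗ[ℂ] ℂ := Finsupp.lsum ℂ Brow14

lemma Bmap14_single (i : ℤ) (v : Fin 2 → ℂ) (b : V14) :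
    Bmap14 (Finsupp.single i v) b = v 0 * b (-1-i) 1 - v 1 * b (-1-i) 0 := by
  rw [Bmap14, Finsupp.lsum_single]
  simp [Brow14, ev14]

lemma finsum_eq_Bmap14 (a b : V14) :
    ∑ᶠ i : ℤ, (a i 0 * b (-1 - i) 1 - a i 1 * b (-1 - i) 0) = Bmap14 a b := by
  rw [finsum_eq_finset_sum_of_support_subset _ (s := a.support) ?_]
  · rw [Bmap14, Finsupp.lsum_apply, Finsupp.sum, LinearMap.sum_apply]
    apply Finset.sum_congr rfl
    intro i _
    simp [Brow14, ev14]
  · intro i hi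
    rw [Function.mem_support] at hi
    rw [Finset.mem_coe, Finsupp.mem_support_iff]
    intro h0
    apply hi
    rw [h0]
    simp

lemma Bmap14_G (c d : ℕ → ℂ) (hc : {i | c i ≠ 0}.Finite) (hd : {i | d i ≠ 0}.Finite)
    (k : ℕ) (b : V14) :
    Bmap14 (G14 c d k) b = ∑ᶠ i : ℕ, (c (i+1+k) * b (i:ℤ) 1 - d (i+1+k) * b (i:ℤ) 0) := by
  have h := (Bmap14.flip b).toAddMonoidHom.map_finsum (hGsupp14 hc hd k)
  simp only [LinearMap.toAddMonoidHom_coe, LinearMap.flip_apply] at h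
  rw [G14, h]
  apply finsum_congr
  intro i
  rw [Bmap14_single]
  have : -1 - (-(i:ℤ) - 1) = (i:ℤ) := by ring
  rw [this]
  simp


section Gen

lemma Bmap14_gen {c d c' d' : ℕ → ℂ}
    (hc : {i | c i ≠ 0}.Finite) (hd : {i | d i ≠ 0}.Finite)
    (hc' : {i | c' i ≠ 0}.Finite) (hd' : {i | d' i ≠ 0}.Finite)
    (k l : ℕ) (v w : Fin 2 → ℂ) :
    Bmap14 (Finsupp.single (k : ℤ) v + G14 c d k) (Finsupp.single (l : ℤ) w + G14 c' d' l)
      = (v 0 * d' (k+1+l) - v 1 * c' (k+1+l)) + (c (l+1+k) * w 1 - d (l+1+k) * w 0) := by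
  have hb1 : (Finsupp.single (l : ℤ) w + G14 c' d' l) (-1 - (k:ℤ))
      = ![c' (k+1+l), d' (k+1+l)] := by
    have h0 : (-1 - (k:ℤ)) = Int.negSucc k := by rw [Int.negSucc_eq]; ring
    rw [Finsupp.add_apply, h0, G14_apply_negSucc c' d' hc' hd',
      Finsupp.single_eq_of_ne (by rw [Int.negSucc_eq]; omega), zero_add]
  have hb2 : ∀ i : ℕ, (Finsupp.single (l : ℤ) w + G14 c' d' l) (i:ℤ)
      = if (l:ℤ) = (i:ℤ) then w else 0 := by
    intro i
    rw [Finsupp.add_apply, G14_apply_ofNat c' d' hc' hd', add_zero, Finsupp.single_apply]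
  rw [show Bmap14 (Finsupp.single (k : ℤ) v + G14 c d k)
        = Bmap14 (Finsupp.single (k : ℤ) v) + Bmap14 (G14 c d k) from map_add _ _ _,
    LinearMap.add_apply, Bmap14_single, Bmap14_G c d hc hd, hb1]
  have hfin : ∑ᶠ i : ℕ, (c (i+1+k) * (Finsupp.single (l : ℤ) w + G14 c' d' l) (i:ℤ) 1
        - d (i+1+k) * (Finsupp.single (l : ℤ) w + G14 c' d' l) (i:ℤ) 0)
      = c (l+1+k) * w 1 - d (l+1+k) * w 0 := by
    rw [finsum_eq_single _ l ?_]
    · rw [hb2 l, if_pos rfl]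
    · intro i hi
      rw [hb2 i, if_neg (by exact_mod_cast fun h => hi (by omega))]
      simp
  rw [hfin]
  simp

end Gen
section Prt

lemma mapD14_apply (u : V14) (j : ℤ) : Finsupp.mapDomain (· + 1) u j = u (j - 1) := by
  have h : j = (j - 1) + 1 := by ring
  conv_lhs => rw [h]
  exact Finsupp.mapDomain_apply (fun a b hab => by omega) u (j - 1)

lemma prt14_gen {c d : ℕ → ℂ}
    (hc : {i | c i ≠ 0}.Finite) (hd : {i | d i ≠ 0}.Finite) (k : ℕ) (v : Fin 2 → ℂ) :
    Finsupp.mapDomain (· + 1) (Finsupp.single (k : ℤ) v + G14 c d k)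
        - Finsupp.single 0 ((Finsupp.mapDomain (· + 1)
            (Finsupp.single (k : ℤ) v + G14 c d k)) 0)
      = Finsupp.single ((k + 1 : ℕ) : ℤ) v + G14 c d (k + 1) := by
  have hneg1 : (Finsupp.single (k : ℤ) v + G14 c d k) (-1) = ![c (1+k), d (1+k)] := by
    have h0 : (-1 : ℤ) = Int.negSucc 0 := rfl
    rw [Finsupp.add_apply, h0, G14_apply_negSucc c d hc hd,
      Finsupp.single_eq_of_ne (by rw [Int.negSucc_eq]; omega), zero_add]
  refine Finsupp.ext fun j => ?_
  rw [Finsupp.sub_apply, mapD14_apply, mapD14_apply]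
  rw [show (0:ℤ) - 1 = -1 by norm_num, hneg1]
  rcases j with n | n
  · simp only [Int.ofNat_eq_coe]
    rcases n with _ | n
    · rw [show ((0:ℕ):ℤ) - 1 = -1 by norm_num, hneg1]
      rw [Finsupp.add_apply, G14_apply_ofNat c d hc hd (k+1) 0,
        Finsupp.single_eq_of_ne (show ((k+1:ℕ):ℤ) ≠ ((0:ℕ):ℤ) by omega).symm,
        Finsupp.single_apply, if_pos (by omega)]
      simp
    · rw [show ((n+1:ℕ):ℤ) - 1 = ((n:ℕ):ℤ) by push_cast; ring]
      rw [Finsupp.add_apply, Finsupp.add_apply, G14_apply_ofNat c d hc hd k n,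
        G14_apply_ofNat c d hc hd (k+1) (n+1),
        Finsupp.single_eq_of_ne (show (0:ℤ) ≠ ((n+1:ℕ):ℤ) by omega).symm]
      simp only [Finsupp.single_apply, add_zero, sub_zero]
      rcases eq_or_ne k n with h | h
      · subst h
        rw [if_pos rfl, if_pos rfl]
      · rw [if_neg (by omega), if_neg (by omega)]
  · rw [show Int.negSucc n - 1 = Int.negSucc (n+1) by
        rw [Int.negSucc_eq, Int.negSucc_eq]; omega]
    rw [Finsupp.add_apply, Finsupp.add_apply, G14_apply_negSucc c d hc hd k (n+1),
      G14_apply_negSucc c d hc hd (k+1) n,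
      Finsupp.single_eq_of_ne
        (show ((k:ℕ):ℤ) ≠ Int.negSucc (n+1) by rw [Int.negSucc_eq]; push_cast; omega).symm,
      Finsupp.single_eq_of_ne
        (show (0:ℤ) ≠ Int.negSucc n by rw [Int.negSucc_eq]; omega).symm,
      Finsupp.single_eq_of_ne
        (show ((k+1:ℕ):ℤ) ≠ Int.negSucc n by rw [Int.negSucc_eq]; push_cast; omega).symm]
    rw [show n+1+1+k = n+1+(k+1) by omega]
    simp

end Prt
def prtL14 : V14 →ₗ[ℂ] V14 :=
  Finsupp.lmapDomain (Fin 2 → ℂ) ℂ (· + 1)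
    - (Finsupp.lsingle 0) ∘ₗ (Finsupp.lapply 0) ∘ₗ Finsupp.lmapDomain (Fin 2 → ℂ) ℂ (· + 1)

lemma prtL14_apply (u : V14) :
    prtL14 u = Finsupp.mapDomain (· + 1) u
      - Finsupp.single 0 ((Finsupp.mapDomain (· + 1) u) 0) := by
  simp [prtL14]

end Stmt14Aux


theorem stmt14 (x y z : ℕ → ℂ)
    (hx : {i | x i ≠ 0}.Finite) (hy : {i | y i ≠ 0}.Finite) (hz : {i | z i ≠ 0}.Finite)
    (U : Submodule ℂ (ℤ →₀ (Fin 2 → ℂ)))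
    (hU : U = Submodule.span ℂ
      ({v | ∃ k : ℕ, v = Finsupp.single (k : ℤ) ![1, 0] +
          ∑ᶠ i : ℕ, Finsupp.single (-(i : ℤ) - 1) ![y (i + 1 + k), z (i + 1 + k)]} ∪
       {v | ∃ k : ℕ, v = Finsupp.single (k : ℤ) ![0, 1] +
          ∑ᶠ i : ℕ, Finsupp.single (-(i : ℤ) - 1) ![x (i + 1 + k), -(y (i + 1 + k))]})) :
    (∀ a ∈ U, ∀ b ∈ U,
      ∑ᶠ i : ℤ, (a i 0 * b (-1 - i) 1 - a i 1 * b (-1 - i) 0) = 0) ∧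
    (∀ u ∈ U, Finsupp.mapDomain (· + 1) u -
        Finsupp.single 0 ((Finsupp.mapDomain (· + 1) u) 0) ∈ U) := by
  have hny : {i | (fun n => -(y n)) i ≠ 0}.Finite := hy.subset (fun i hi => by simpa using hi)
  set gens : Set V14 :=
    {v | ∃ k : ℕ, v = Finsupp.single (k : ℤ) ![1, 0] + G14 y z k} ∪
    {v | ∃ k : ℕ, v = Finsupp.single (k : ℤ) ![0, 1] + G14 x (fun n => -(y n)) k} with hgens
  have hU' : U = Submodule.span ℂ gens := hU
  have key : ∀ g1 ∈ gens, ∀ g2 ∈ gens, Bmap14 g1 g2 = 0 := by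
    rintro g1 (⟨k, rfl⟩ | ⟨k, rfl⟩) g2 (⟨l, rfl⟩ | ⟨l, rfl⟩)
    · rw [Bmap14_gen hy hz hy hz, show k+1+l = l+1+k by omega]
      simp
    · rw [Bmap14_gen hy hz hx hny, show k+1+l = l+1+k by omega]
      simp
    · rw [Bmap14_gen hx hny hy hz, show k+1+l = l+1+k by omega]
      simp
    · rw [Bmap14_gen hx hny hx hny, show k+1+l = l+1+k by omega]
      simp
  have step1 : ∀ g ∈ gens, ∀ b ∈ U, Bmap14 g b = 0 := by
    intro g hg b hb
    have h : Submodule.span ℂ gens ≤ LinearMap.ker (Bmap14 g) :=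
      Submodule.span_le.mpr (fun g' hg' => key g hg g' hg')
    exact h (hU' ▸ hb)
  have step2 : ∀ a ∈ U, ∀ b ∈ U, Bmap14 a b = 0 := by
    intro a ha b hb
    have h : Submodule.span ℂ gens ≤ LinearMap.ker (Bmap14.flip b) :=
      Submodule.span_le.mpr (fun g hg => step1 g hg b hb)
    exact h (hU' ▸ ha)
  constructor
  · intro a ha b hb
    rw [finsum_eq_Bmap14]
    exact step2 a ha b hb
  · intro u hu
    have hmono : Submodule.span ℂ gens ≤ Submodule.comap prtL14 (Submodule.span ℂ gens) := by
      apply Submodule.span_le.mpr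
      rintro g (⟨k, rfl⟩ | ⟨k, rfl⟩)
      · simp only [SetLike.mem_coe, Submodule.mem_comap]
        rw [prtL14_apply, prt14_gen hy hz]
        exact Submodule.subset_span (Or.inl ⟨k + 1, rfl⟩)
      · simp only [SetLike.mem_coe, Submodule.mem_comap]
        rw [prtL14_apply, prt14_gen hx hny]
        exact Submodule.subset_span (Or.inr ⟨k + 1, rfl⟩)
    have h2 := hmono (hU' ▸ hu)
    rw [Submodule.mem_comap, prtL14_apply] at h2
    rw [hU']
    exact h2
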